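/- For every integer Δ ≥ 2 there exist three simple graphs G₁, G₂, G₃ on a common finite vertex set, each of maximum degree at most Δ, such that every simultaneous edge-coloring of their union with respect to G₁, G₂, G₃ uses at least 3·⌊Δ/2⌋ colors. -/

import Mathlib

/-- An edge-coloring `c` (a function on potential edges) is *simultaneous* with respect to
the family of graphs `G` if, for each `i`, any two distinct edges of `G i` sharing an
endpoint receive distinct colors. -/
def Simultaneous {V ι β : Type*} (G : ι → SimpleGraph V) (c : Sym2 V → β) : Prop :=
  ∀ i, ∀ e ∈ (G i).edgeSet, ∀ f ∈ (G i).edgeSet, e ≠ f → (∃ v, v ∈ e ∧ v ∈ f) → c e ≠ c f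

theorem simultaneous_coloring_lower_bound_three (Δ : ℕ) (hΔ : 2 ≤ Δ) :
    ∃ (V : Type) (_ : Fintype V) (G : Fin 3 → SimpleGraph V),
      (∀ i v, ((G i).neighborSet v).ncard ≤ Δ) ∧
      ∀ (N : ℕ) (c : Sym2 V → Fin N), Simultaneous G c → 3 * (Δ / 2) ≤ N := by
  set k := Δ / 2 with hk
  refine ⟨Option (Fin 3 × Fin k), inferInstance,
    fun i => SimpleGraph.fromRel (fun x y => x = none ∧ ∃ p : Fin 3 × Fin k, y = some p ∧ p.1 ≠ i),
    ?_, ?_⟩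
  · intro i v
    match v with
    | none =>
      have hset : (SimpleGraph.fromRel (fun x y => x = none ∧
          ∃ p : Fin 3 × Fin k, y = some p ∧ p.1 ≠ i)).neighborSet none
          = some '' {p : Fin 3 × Fin k | p.1 ≠ i} := by
        ext y
        simp only [SimpleGraph.mem_neighborSet, SimpleGraph.fromRel_adj, Set.mem_image,
          Set.mem_setOf_eq]
        constructor
        · rintro ⟨hne, h | h⟩
          · obtain ⟨-, p, rfl, hp⟩ := h
            exact ⟨p, hp, rfl⟩
          · exact absurd h.1.symm hne
        · rintro ⟨p, hp, rfl⟩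
          exact ⟨by simp, Or.inl ⟨trivial, p, rfl, hp⟩⟩
      rw [hset, Set.ncard_image_of_injective _ (Option.some_injective _)]
      have : {p : Fin 3 × Fin k | p.1 ≠ i} = ({i}ᶜ : Set (Fin 3)) ×ˢ (Set.univ : Set (Fin k)) := by
        ext p; simp
      rw [this]
      have h2 : (({i}ᶜ : Set (Fin 3)) ×ˢ (Set.univ : Set (Fin k))).ncard = 2 * k := by
        rw [Set.ncard_eq_toFinset_card']
        simp [Set.toFinset_prod, Finset.card_compl]
      rw [h2]
      calc 2 * k ≤ Δ := by rw [hk]; omega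
    | some p =>
      have hsub : (SimpleGraph.fromRel (fun x y => x = none ∧
          ∃ q : Fin 3 × Fin k, y = some q ∧ q.1 ≠ i)).neighborSet (some p) ⊆ {none} := by
        intro y hy
        simp only [SimpleGraph.mem_neighborSet, SimpleGraph.fromRel_adj] at hy
        obtain ⟨hne, h | h⟩ := hy
        · exact absurd h.1 (by simp)
        · simp [h.1]
      calc ((SimpleGraph.fromRel _).neighborSet (some p)).ncard
          ≤ ({none} : Set (Option (Fin 3 × Fin k))).ncard :=
            Set.ncard_le_ncard hsub (Set.finite_singleton _)
        _ = 1 := Set.ncard_singleton _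
        _ ≤ Δ := by omega
  · intro N c hc
    have hinj : Function.Injective (fun p : Fin 3 × Fin k => c s(none, some p)) := by
      intro p q hpq
      by_contra hne
      have hex : ∀ a b : Fin 3, ∃ i : Fin 3, i ≠ a ∧ i ≠ b := by decide
      obtain ⟨i, hip, hiq⟩ := hex p.1 q.1
      have hadj : ∀ r : Fin 3 × Fin k, r.1 ≠ i →
          s(none, some r) ∈ (SimpleGraph.fromRel (fun x y => x = none ∧
            ∃ p : Fin 3 × Fin k, y = some p ∧ p.1 ≠ i)).edgeSet := by
        intro r hr
        simp only [SimpleGraph.mem_edgeSet, SimpleGraph.fromRel_adj]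
        exact ⟨by simp, Or.inl ⟨trivial, r, rfl, hr⟩⟩
      have hep : s(none, some p) ≠ s(none, some q) := by
        intro h
        rw [Sym2.eq_iff] at h
        rcases h with ⟨-, h⟩ | ⟨h, -⟩
        · exact hne (Option.some_injective _ h)
        · exact Option.some_ne_none _ h.symm
      exact hc i _ (hadj p (fun h => hip h.symm)) _ (hadj q (fun h => hiq h.symm)) hep
        ⟨none, by simp, by simp⟩ hpq
    have := Fintype.card_le_of_injective _ hinj
    simpa [mul_comm] using this
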